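/- arXiv:1803.01889 — 3 statements merged into one kernel-verified Lean document; each statement's English description precedes it below -/
import Mathlib

section
/- Let N ≥ 1, let w : ℝ → ℝ^N have bounded total variation, let ℓ ≥ 0, let α : ℝ → [0,∞) be Lebesgue integrable, and let g : ℝ × ℝ^N → ℝ^N satisfy ‖g(x,u) − g(x,v)‖ ≤ ℓ·‖u − v‖ for all x ∈ ℝ and all u, v ∈ ℝ^N, and ‖g(y,u) − g(x,u)‖ ≤ ∫_x^y α(s) ds for all x ≤ y and all u ∈ ℝ^N. Then the function h : ℝ → ℝ^N defined by h(x) := g(x, w(x)) has bounded total variation, and Tot.Var.(h) ≤ ℓ·Tot.Var.(w) + ∫_ℝ α(s) ds. -/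
/-- If `w : ℝ → ℝ^N` has bounded total variation, `g = g(x,u)` is
`ℓ`-Lipschitz in `u` and its `x`-increments are controlled by the integral of an
integrable nonnegative function `α`, then `h x = g (x, w x)` has bounded total
variation, with `Tot.Var.(h) ≤ ℓ · Tot.Var.(w) + ∫ α`. -/
theorem stmt0 (N : ℕ) (hN : 1 ≤ N)
    (w : ℝ → EuclideanSpace ℝ (Fin N))
    (hw : BoundedVariationOn w Set.univ)
    (ℓ : ℝ) (hℓ : 0 ≤ ℓ)
    (α : ℝ → ℝ) (hα0 : ∀ s, 0 ≤ α s) (hαint : MeasureTheory.Integrable α)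
    (g : ℝ × EuclideanSpace ℝ (Fin N) → EuclideanSpace ℝ (Fin N))
    (hLip : ∀ (x : ℝ) (u v : EuclideanSpace ℝ (Fin N)),
      ‖g (x, u) - g (x, v)‖ ≤ ℓ * ‖u - v‖)
    (hx : ∀ (x y : ℝ) (u : EuclideanSpace ℝ (Fin N)), x ≤ y →
      ‖g (y, u) - g (x, u)‖ ≤ ∫ s in x..y, α s) :
    BoundedVariationOn (fun x => g (x, w x)) Set.univ ∧
      eVariationOn (fun x => g (x, w x)) Set.univ ≤
        ENNReal.ofReal ℓ * eVariationOn w Set.univ + ENNReal.ofReal (∫ s, α s) := by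
  have key : ∀ x y : ℝ, x ≤ y →
      edist (g (y, w y)) (g (x, w x)) ≤
        ENNReal.ofReal ℓ * edist (w y) (w x) + ENNReal.ofReal (∫ s in x..y, α s) := by
    intro x y hxy
    have hint : (0:ℝ) ≤ ∫ s in x..y, α s :=
      intervalIntegral.integral_nonneg hxy (fun s _ => hα0 s)
    have h1 : ‖g (y, w y) - g (x, w x)‖ ≤ ℓ * ‖w y - w x‖ + ∫ s in x..y, α s := by
      calc ‖g (y, w y) - g (x, w x)‖
          ≤ ‖g (y, w y) - g (y, w x)‖ + ‖g (y, w x) - g (x, w x)‖ :=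
            norm_sub_le_norm_sub_add_norm_sub _ _ _
        _ ≤ ℓ * ‖w y - w x‖ + ∫ s in x..y, α s :=
            add_le_add (hLip y _ _) (hx x y _ hxy)
    rw [edist_dist, dist_eq_norm, edist_dist, dist_eq_norm]
    calc ENNReal.ofReal ‖g (y, w y) - g (x, w x)‖
        ≤ ENNReal.ofReal (ℓ * ‖w y - w x‖ + ∫ s in x..y, α s) := ENNReal.ofReal_le_ofReal h1
      _ = ENNReal.ofReal (ℓ * ‖w y - w x‖) + ENNReal.ofReal (∫ s in x..y, α s) :=
          ENNReal.ofReal_add (by positivity) hint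
      _ = ENNReal.ofReal ℓ * ENNReal.ofReal ‖w y - w x‖ + ENNReal.ofReal (∫ s in x..y, α s) := by
          rw [ENNReal.ofReal_mul hℓ]
  have hb : eVariationOn (fun x => g (x, w x)) Set.univ ≤
      ENNReal.ofReal ℓ * eVariationOn w Set.univ + ENNReal.ofReal (∫ s, α s) := by
    rw [eVariationOn]
    refine iSup_le ?_
    rintro ⟨n, u, hu, -⟩
    have step : ∀ i, edist (g (u (i+1), w (u (i+1)))) (g (u i, w (u i))) ≤
        ENNReal.ofReal ℓ * edist (w (u (i+1))) (w (u i)) +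
          ENNReal.ofReal (∫ s in u i..u (i+1), α s) :=
      fun i => key _ _ (hu (Nat.le_succ i))
    calc ∑ i ∈ Finset.range n, edist (g (u (i+1), w (u (i+1)))) (g (u i, w (u i)))
        ≤ ∑ i ∈ Finset.range n, (ENNReal.ofReal ℓ * edist (w (u (i+1))) (w (u i)) +
            ENNReal.ofReal (∫ s in u i..u (i+1), α s)) :=
          Finset.sum_le_sum fun i _ => step i
      _ = ENNReal.ofReal ℓ * ∑ i ∈ Finset.range n, edist (w (u (i+1))) (w (u i)) +
            ∑ i ∈ Finset.range n, ENNReal.ofReal (∫ s in u i..u (i+1), α s) := by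
          rw [Finset.sum_add_distrib, Finset.mul_sum]
      _ ≤ ENNReal.ofReal ℓ * eVariationOn w Set.univ + ENNReal.ofReal (∫ s, α s) := by
          refine add_le_add (mul_le_mul_right (eVariationOn.sum_le (f := w) (n := n) hu fun i => Set.mem_univ _) _) ?_
          have hsum : ∑ i ∈ Finset.range n, ENNReal.ofReal (∫ s in u i..u (i+1), α s) =
              ENNReal.ofReal (∫ s in (u 0)..(u n), α s) := by
            rw [← ENNReal.ofReal_sum_of_nonneg (fun i _ =>
              intervalIntegral.integral_nonneg (hu (Nat.le_succ i)) (fun s _ => hα0 s))]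
            congr 1
            exact intervalIntegral.sum_integral_adjacent_intervals
              (fun k _ => hαint.intervalIntegrable)
          rw [hsum]
          refine ENNReal.ofReal_le_ofReal ?_
          rw [intervalIntegral.integral_of_le (hu (Nat.zero_le n))]
          exact MeasureTheory.setIntegral_le_integral hαint
            (Filter.Eventually.of_forall fun s => hα0 s)
    done
  refine ⟨?_, hb⟩
  intro htop
  rw [htop] at hb
  exact (hb.trans_lt (by
    apply ENNReal.add_lt_top.mpr
    exact ⟨ENNReal.mul_lt_top ENNReal.ofReal_lt_top (lt_top_iff_ne_top.mpr hw),
      ENNReal.ofReal_lt_top⟩)).ne rfl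
end

section
/- Let N ≥ 1, let u, w : ℝ → ℝ^N have bounded total variation, let τ ≥ 0, let ℓ ≥ 0, let α : ℝ → [0,∞) be Lebesgue integrable, and let g : ℝ × ℝ^N → ℝ^N satisfy ‖g(x,p) − g(x,q)‖ ≤ ℓ·‖p − q‖ for all x ∈ ℝ and all p, q ∈ ℝ^N, and ‖g(y,p) − g(x,p)‖ ≤ ∫_x^y α(s) ds for all x ≤ y and all p ∈ ℝ^N. Define v(x) := u(x) + τ·g(x, w(x)). Then v has bounded total variation and |Tot.Var.(v) − Tot.Var.(u)| ≤ τ·(ℓ·Tot.Var.(w) + ∫_ℝ α(s) ds). -/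
open MeasureTheory Set

/-- Triangle inequality for `eVariationOn` of a pointwise sum. -/
lemma eVarOn_add_le {α : Type*} [LinearOrder α] {E : Type*} [SeminormedAddCommGroup E]
    (f g : α → E) (s : Set α) :
    eVariationOn (fun x => f x + g x) s ≤ eVariationOn f s + eVariationOn g s := by
  apply iSup_le
  rintro ⟨n, uu, hu, hs⟩
  calc ∑ i ∈ Finset.range n, edist (f (uu (i+1)) + g (uu (i+1))) (f (uu i) + g (uu i))
      ≤ ∑ i ∈ Finset.range n,
        (edist (f (uu (i+1))) (f (uu i)) + edist (g (uu (i+1))) (g (uu i))) := by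
        refine Finset.sum_le_sum fun i _ => ?_
        simp only [edist_dist]
        rw [← ENNReal.ofReal_add dist_nonneg dist_nonneg]
        exact ENNReal.ofReal_le_ofReal (dist_add_add_le _ _ _ _)
    _ = ∑ i ∈ Finset.range n, edist (f (uu (i+1))) (f (uu i))
        + ∑ i ∈ Finset.range n, edist (g (uu (i+1))) (g (uu i)) := Finset.sum_add_distrib
    _ ≤ eVariationOn f s + eVariationOn g s :=
        add_le_add (eVariationOn.sum_le (f := f) (n := n) hu hs) (eVariationOn.sum_le (f := g) (n := n) hu hs)

lemma eVarOn_neg {α : Type*} [LinearOrder α] {E : Type*} [SeminormedAddCommGroup E]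
    (f : α → E) (s : Set α) :
    eVariationOn (fun x => -f x) s = eVariationOn f s := by
  have : ∀ (g : α → E), eVariationOn (fun x => -g x) s ≤ eVariationOn g s := by
    intro g
    apply iSup_le
    rintro ⟨n, uu, hu, hs⟩
    calc ∑ i ∈ Finset.range n, edist (-g (uu (i+1))) (-g (uu i))
        = ∑ i ∈ Finset.range n, edist (g (uu (i+1))) (g (uu i)) := by
          refine Finset.sum_congr rfl fun i _ => ?_
          rw [edist_neg_neg]
      _ ≤ eVariationOn g s := eVariationOn.sum_le (f := g) (n := n) hu hs
  refine le_antisymm (this f) ?_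
  have := this (fun x => -f x)
  simpa using this

/-- first inequality of Lemma `timeEst`. The source update
`v x = u x + τ • g (x, w x)` changes the total variation by at most
`τ · (ℓ · Tot.Var.(w) + ∫ α)`. -/
theorem stmt1 (N : ℕ) (hN : 1 ≤ N)
    (u w : ℝ → EuclideanSpace ℝ (Fin N))
    (hu : BoundedVariationOn u Set.univ)
    (hw : BoundedVariationOn w Set.univ)
    (τ : ℝ) (hτ : 0 ≤ τ)
    (ℓ : ℝ) (hℓ : 0 ≤ ℓ)
    (α : ℝ → ℝ) (hα0 : ∀ s, 0 ≤ α s) (hαint : MeasureTheory.Integrable α)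
    (g : ℝ × EuclideanSpace ℝ (Fin N) → EuclideanSpace ℝ (Fin N))
    (hLip : ∀ (x : ℝ) (p q : EuclideanSpace ℝ (Fin N)),
      ‖g (x, p) - g (x, q)‖ ≤ ℓ * ‖p - q‖)
    (hx : ∀ (x y : ℝ) (p : EuclideanSpace ℝ (Fin N)), x ≤ y →
      ‖g (y, p) - g (x, p)‖ ≤ ∫ s in x..y, α s) :
    BoundedVariationOn (fun x => u x + τ • g (x, w x)) Set.univ ∧
      |(eVariationOn (fun x => u x + τ • g (x, w x)) Set.univ).toReal -
          (eVariationOn u Set.univ).toReal| ≤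
        τ * (ℓ * (eVariationOn w Set.univ).toReal + ∫ s, α s) := by
  set h : ℝ → EuclideanSpace ℝ (Fin N) := fun x => τ • g (x, w x) with hh
  set B : ENNReal := ENNReal.ofReal (τ * ℓ) * eVariationOn w Set.univ
      + ENNReal.ofReal (τ * ∫ s, α s) with hB
  have hαI : 0 ≤ ∫ s, α s := integral_nonneg hα0
  -- pointwise edist bound for h
  have hpt : ∀ x y : ℝ, x ≤ y → edist (h y) (h x) ≤
      ENNReal.ofReal (τ * ℓ) * edist (w y) (w x)
      + ENNReal.ofReal (τ * ∫ s in x..y, α s) := by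
    intro x y hxy
    have hnorm : ‖h y - h x‖ ≤ τ * ℓ * ‖w y - w x‖ + τ * ∫ s in x..y, α s := by
      have : h y - h x = τ • (g (y, w y) - g (y, w x)) + τ • (g (y, w x) - g (x, w x)) := by
        simp [hh, smul_sub]
      rw [this]
      refine (norm_add_le _ _).trans ?_
      rw [norm_smul, norm_smul, Real.norm_eq_abs, abs_of_nonneg hτ]
      have h1 := hLip y (w y) (w x)
      have h2 := hx x y (w x) hxy
      nlinarith [norm_nonneg (g (y, w y) - g (y, w x)), norm_nonneg (g (y, w x) - g (x, w x))]
    calc edist (h y) (h x) = ENNReal.ofReal ‖h y - h x‖ := by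
          rw [edist_dist, dist_eq_norm]
      _ ≤ ENNReal.ofReal (τ * ℓ * ‖w y - w x‖ + τ * ∫ s in x..y, α s) :=
          ENNReal.ofReal_le_ofReal hnorm
      _ ≤ ENNReal.ofReal (τ * ℓ * ‖w y - w x‖) + ENNReal.ofReal (τ * ∫ s in x..y, α s) :=
          ENNReal.ofReal_add_le
      _ = ENNReal.ofReal (τ * ℓ) * edist (w y) (w x)
          + ENNReal.ofReal (τ * ∫ s in x..y, α s) := by
          rw [edist_dist, dist_eq_norm, ENNReal.ofReal_mul (by positivity)]
  -- variation bound for h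
  have hTVh : eVariationOn h Set.univ ≤ B := by
    apply iSup_le
    rintro ⟨n, uu, hmono, -⟩
    have hint0 : ∀ i j : ℝ, 0 ≤ ∫ s in i..j, α s → True := fun _ _ _ => trivial
    calc ∑ i ∈ Finset.range n, edist (h (uu (i+1))) (h (uu i))
        ≤ ∑ i ∈ Finset.range n, (ENNReal.ofReal (τ * ℓ) * edist (w (uu (i+1))) (w (uu i))
            + ENNReal.ofReal (τ * ∫ s in uu i..uu (i+1), α s)) := by
          refine Finset.sum_le_sum fun i _ => hpt _ _ (hmono (Nat.le_succ i))
      _ = ENNReal.ofReal (τ * ℓ) * ∑ i ∈ Finset.range n, edist (w (uu (i+1))) (w (uu i))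
          + ∑ i ∈ Finset.range n, ENNReal.ofReal (τ * ∫ s in uu i..uu (i+1), α s) := by
          rw [Finset.sum_add_distrib, Finset.mul_sum]
      _ ≤ ENNReal.ofReal (τ * ℓ) * eVariationOn w Set.univ
          + ENNReal.ofReal (τ * ∫ s, α s) := by
          refine add_le_add (mul_le_mul_right
            (eVariationOn.sum_le (f := w) (n := n) hmono (fun i => mem_univ _)) _) ?_
          have hsum : ∑ i ∈ Finset.range n, ENNReal.ofReal (τ * ∫ s in uu i..uu (i+1), α s)
              = ENNReal.ofReal (τ * ∫ s in (uu 0)..(uu n), α s) := by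
            have htel : ∑ i ∈ Finset.range n, ∫ s in uu i..uu (i+1), α s
                = ∫ s in (uu 0)..(uu n), α s :=
              intervalIntegral.sum_integral_adjacent_intervals
                (fun k _ => hαint.intervalIntegrable)
            rw [← htel, Finset.mul_sum, ENNReal.ofReal_sum_of_nonneg]
            intro i _
            have : 0 ≤ ∫ s in uu i..uu (i+1), α s :=
              intervalIntegral.integral_nonneg (hmono (Nat.le_succ i)) (fun s _ => hα0 s)
            positivity
          rw [hsum]
          refine ENNReal.ofReal_le_ofReal ?_
          have h0n : uu 0 ≤ uu n := hmono (Nat.zero_le n)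
          have : ∫ s in (uu 0)..(uu n), α s ≤ ∫ s, α s := by
            rw [intervalIntegral.integral_of_le h0n]
            exact setIntegral_le_integral hαint (Filter.Eventually.of_forall hα0)
          nlinarith
  have hBfin : B ≠ ⊤ := by
    simp only [hB, ne_eq, ENNReal.add_eq_top, not_or]
    exact ⟨ENNReal.mul_ne_top ENNReal.ofReal_ne_top hw, ENNReal.ofReal_ne_top⟩
  have hv1 : eVariationOn (fun x => u x + τ • g (x, w x)) Set.univ
      ≤ eVariationOn u Set.univ + B :=
    (eVarOn_add_le u h Set.univ).trans (add_le_add_right hTVh _)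
  have hBV : BoundedVariationOn (fun x => u x + τ • g (x, w x)) Set.univ := by
    refine ne_top_of_le_ne_top ?_ hv1
    exact ENNReal.add_ne_top.mpr ⟨hu, hBfin⟩
  refine ⟨hBV, ?_⟩
  have hv2 : eVariationOn u Set.univ
      ≤ eVariationOn (fun x => u x + τ • g (x, w x)) Set.univ + B := by
    have : eVariationOn u Set.univ
        ≤ eVariationOn (fun x => u x + τ • g (x, w x)) Set.univ
          + eVariationOn (fun x => -h x) Set.univ := by
      have := eVarOn_add_le (fun x => u x + τ • g (x, w x)) (fun x => -h x) Set.univ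
      simpa [hh] using this
    rw [eVarOn_neg] at this
    exact this.trans (add_le_add_right hTVh _)
  -- convert to reals
  have hBtoReal : B.toReal = τ * ℓ * (eVariationOn w Set.univ).toReal + τ * ∫ s, α s := by
    rw [hB, ENNReal.toReal_add (ENNReal.mul_ne_top ENNReal.ofReal_ne_top hw)
      ENNReal.ofReal_ne_top, ENNReal.toReal_mul, ENNReal.toReal_ofReal (by positivity),
      ENNReal.toReal_ofReal (by positivity)]
  have hufin : eVariationOn u Set.univ ≠ ⊤ := hu
  have hvfin : eVariationOn (fun x => u x + τ • g (x, w x)) Set.univ ≠ ⊤ := hBV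
  have r1 : (eVariationOn (fun x => u x + τ • g (x, w x)) Set.univ).toReal
      ≤ (eVariationOn u Set.univ).toReal + B.toReal := by
    rw [← ENNReal.toReal_add hufin hBfin]
    exact ENNReal.toReal_mono (ENNReal.add_ne_top.mpr ⟨hufin, hBfin⟩) hv1
  have r2 : (eVariationOn u Set.univ).toReal
      ≤ (eVariationOn (fun x => u x + τ • g (x, w x)) Set.univ).toReal + B.toReal := by
    rw [← ENNReal.toReal_add hvfin hBfin]
    exact ENNReal.toReal_mono (ENNReal.add_ne_top.mpr ⟨hvfin, hBfin⟩) hv2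
  rw [abs_sub_le_iff]
  constructor <;> nlinarith [hBtoReal]
end

section
/- Let (μ_ν)_{ν∈ℕ} and μ be finite nonnegative Borel measures on ℝ such that μ_ν converges to μ weakly, i.e. ∫ f dμ_ν → ∫ f dμ for every bounded continuous f : ℝ → ℝ. Then for every point ξ ∈ ℝ there exists a sequence of radii r_ν ≥ 0 with r_ν → 0 such that μ_ν([ξ − r_ν, ξ + r_ν]) → μ({ξ}). -/
open Filter MeasureTheory

lemma diag_aux {g : ℕ → ℕ → ℝ} {a : ℕ → ℝ} {b : ℝ}
    (hg : ∀ k, Tendsto (fun ν => g ν k) atTop (nhds (a k)))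
    (ha : Tendsto a atTop (nhds b)) :
    ∃ K : ℕ → ℕ, Tendsto K atTop atTop ∧ Tendsto (fun ν => g ν (K ν)) atTop (nhds b) := by
  have hN : ∀ k : ℕ, ∃ N : ℕ, ∀ ν ≥ N, |g ν k - a k| < 1 / (k + 1) := by
    intro k
    obtain ⟨N, hN⟩ := (Metric.tendsto_atTop.mp (hg k)) (1 / (k + 1))
      (by positivity)
    exact ⟨N, fun ν hν => by simpa [Real.dist_eq] using hN ν hν⟩
  choose N hNspec using hN
  obtain ⟨M, hM_mono, hMN⟩ :
      ∃ M : ℕ → ℕ, StrictMono M ∧ ∀ k, N k ≤ M k := by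
    refine ⟨fun k => ∑ i ∈ Finset.range (k + 1), (N i + 1), ?_, ?_⟩
    · apply strictMono_nat_of_lt_succ
      intro k
      rw [Finset.sum_range_succ (n := k + 1)]
      omega
    · intro k
      have h := Finset.single_le_sum (f := fun i => N i + 1)
        (fun i _ => Nat.zero_le _) (Finset.self_mem_range_succ k)
      simp only at h ⊢
      omega
  set K : ℕ → ℕ := fun ν => Nat.findGreatest (fun k => M k ≤ ν) ν with hKdef
  have hK_top : Tendsto K atTop atTop := by
    rw [tendsto_atTop]
    intro k
    filter_upwards [eventually_ge_atTop (max (M k) k)] with ν hν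
    exact Nat.le_findGreatest (le_trans (le_max_right _ _) hν)
      (le_trans (le_max_left _ _) hν)
  have hMK : ∀ ν ≥ M 0, M (K ν) ≤ ν := by
    intro ν hν
    exact Nat.findGreatest_spec (P := fun k => M k ≤ ν) (m := 0) (Nat.zero_le ν) hν
  have key : ∀ ν ≥ M 0, |g ν (K ν) - a (K ν)| < 1 / (K ν + 1) := by
    intro ν hν
    exact hNspec (K ν) ν (le_trans (hMN _) (hMK ν hν))
  refine ⟨K, hK_top, ?_⟩
  rw [tendsto_iff_dist_tendsto_zero]
  have hφ : Tendsto (fun k : ℕ => 1 / (k + 1 : ℝ) + |a k - b|) atTop (nhds 0) := by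
    have h1 : Tendsto (fun k : ℕ => 1 / (k + 1 : ℝ)) atTop (nhds 0) :=
      tendsto_one_div_add_atTop_nhds_zero_nat
    have h2 : Tendsto (fun k : ℕ => |a k - b|) atTop (nhds 0) := by
      have h2' : Tendsto (fun k => a k - b) atTop (nhds (b - b)) :=
        ha.sub tendsto_const_nhds
      have := h2'.abs
      simpa using this
    simpa using h1.add h2
  apply squeeze_zero' (Filter.Eventually.of_forall fun ν => dist_nonneg)
    ?_ (hφ.comp hK_top)
  filter_upwards [eventually_ge_atTop (M 0)] with ν hν
  have := key ν hν
  calc dist (g ν (K ν)) b ≤ |g ν (K ν) - a (K ν)| + |a (K ν) - b| := by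
        rw [Real.dist_eq]
        have := abs_sub_abs_le_abs_sub (g ν (K ν) - b) (a (K ν) - b)
        calc |g ν (K ν) - b| = |(g ν (K ν) - a (K ν)) + (a (K ν) - b)| := by ring_nf
          _ ≤ |g ν (K ν) - a (K ν)| + |a (K ν) - b| := abs_add_le _ _
    _ ≤ 1 / (K ν + 1) + |a (K ν) - b| := by linarith [this]

/-- Extraction of atoms under weak convergence of finite
nonnegative Borel measures on `ℝ`: there are radii `r_ν → 0` with
`μ_ν([ξ − r_ν, ξ + r_ν]) → μ({ξ})`. -/
theorem stmt6 (μs : ℕ → Measure ℝ) (μ : Measure ℝ)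
    [∀ ν, IsFiniteMeasure (μs ν)] [IsFiniteMeasure μ]
    (hweak : ∀ f : BoundedContinuousFunction ℝ ℝ,
      Tendsto (fun ν => ∫ x, f x ∂(μs ν)) atTop (nhds (∫ x, f x ∂μ)))
    (ξ : ℝ) :
    ∃ r : ℕ → ℝ, (∀ ν, 0 ≤ r ν) ∧ Tendsto r atTop (nhds 0) ∧
      Tendsto (fun ν => μs ν (Set.Icc (ξ - r ν) (ξ + r ν))) atTop (nhds (μ {ξ})) := by
  classical
  set ms : ℕ → FiniteMeasure ℝ := fun ν => ⟨μs ν, inferInstance⟩ with hms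
  set m : FiniteMeasure ℝ := ⟨μ, inferInstance⟩ with hm
  have htend : Tendsto ms atTop (nhds m) :=
    FiniteMeasure.tendsto_iff_forall_integral_tendsto.mpr hweak
  have h_closed : ∀ F : Set ℝ, IsClosed F →
      (atTop.limsup fun ν => μs ν F) ≤ μ F :=
    fun F hF => FiniteMeasure.limsup_measure_closed_le_of_tendsto htend hF
  have h_univ : Tendsto (fun ν => μs ν Set.univ) atTop (nhds (μ Set.univ)) := by
    have h1 := htend.mass
    have h2 := ENNReal.tendsto_coe.mpr h1
    simp [FiniteMeasure.ennreal_mass] at h2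
    exact h2
  -- open sets: liminf bound
  have h_open : ∀ G : Set ℝ, MeasurableSet G → IsOpen G →
      μ G ≤ atTop.liminf fun ν => μs ν G := by
    intro G hGm hGo
    rw [le_liminf_iff]
    intro c hc
    have hGc : μ Gᶜ ≠ ⊤ := (measure_lt_top μ _).ne
    have hcne : c ≠ ⊤ := (hc.trans (measure_lt_top μ G)).ne
    have hadd : c + μ Gᶜ < μ Set.univ := by
      have huniv : μ G + μ Gᶜ = μ Set.univ := by
        rw [← measure_union disjoint_compl_right hGm.compl, Set.union_compl_self]
      calc c + μ Gᶜ < μ G + μ Gᶜ := ENNReal.add_lt_add_right hGc hc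
        _ = μ Set.univ := huniv
    obtain ⟨d, hd1, hd2⟩ := exists_between hadd
    have hdne : d ≠ ⊤ := (hd2.trans (measure_lt_top μ _)).ne
    have hev1 : ∀ᶠ ν in atTop, d < μs ν Set.univ :=
      h_univ.eventually_const_lt hd2
    have hcompl : μ Gᶜ < d - c := lt_tsub_iff_left.mpr hd1
    have hev2 : ∀ᶠ ν in atTop, μs ν Gᶜ < d - c :=
      eventually_lt_of_limsup_lt ((h_closed Gᶜ hGo.isClosed_compl).trans_lt hcompl)
    filter_upwards [hev1, hev2] with ν h1 h2
    by_contra hle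
    push_neg at hle
    have : μs ν Set.univ < d := by
      calc μs ν Set.univ = μs ν (G ∪ Gᶜ) := by rw [Set.union_compl_self]
        _ ≤ μs ν G + μs ν Gᶜ := measure_union_le _ _
        _ ≤ c + μs ν Gᶜ := add_le_add_left hle _
        _ < c + (d - c) := ENNReal.add_lt_add_left hcne h2
        _ = d := add_tsub_cancel_of_le (le_self_add.trans hd1.le)
    exact absurd h1 (not_lt.mpr this.le)
  -- convergence on good closed intervals
  have hIcc : ∀ δ : ℝ, 0 < δ → μ {ξ - δ} = 0 → μ {ξ + δ} = 0 →
      Tendsto (fun ν => μs ν (Set.Icc (ξ - δ) (ξ + δ))) atTop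
        (nhds (μ (Set.Icc (ξ - δ) (ξ + δ)))) := by
    intro δ hδ h1 h2
    refine tendsto_measure_of_le_liminf_measure_of_limsup_measure_le
      Set.Ioo_subset_Icc_self (subset_refl _) ?_ ?_ ?_
    · refine measure_mono_null ?_ (measure_union_null h1 h2)
      intro x hx
      simp only [Set.mem_diff, Set.mem_Icc, Set.mem_Ioo, not_and_or, not_lt] at hx
      simp only [Set.mem_union, Set.mem_singleton_iff]
      rcases hx with ⟨⟨hl, hr⟩, h | h⟩
      · exact Or.inl (le_antisymm h hl)
      · exact Or.inr (le_antisymm hr h)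
    · exact h_open _ measurableSet_Ioo isOpen_Ioo
    · exact h_closed _ isClosed_Icc
  -- choose good radii
  have hδex : ∀ k : ℕ, ∃ δ : ℝ, δ ∈ Set.Ioo 0 (1 / (k + 1 : ℝ)) ∧
      μ {ξ - δ} = 0 ∧ μ {ξ + δ} = 0 := by
    intro k
    obtain ⟨δ, hmem, hnull⟩ := MeasureTheory.exists_null_frontier_thickening μ {ξ}
      (show (0 : ℝ) < 1 / (k + 1) by positivity)
    rw [Metric.thickening_singleton, Real.ball_eq_Ioo,
      frontier_Ioo (by linarith [hmem.1])] at hnull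
    refine ⟨δ, hmem, ?_, ?_⟩
    · exact measure_mono_null (by simp) hnull
    · exact measure_mono_null (by simp) hnull
  choose δ hδmem hδ1 hδ2 using hδex
  -- squeeze: μ (Icc (ξ - δ k) (ξ + δ k)) → μ {ξ}
  have hS : Tendsto (fun k : ℕ => μ (Set.Icc (ξ - 1 / (k + 1)) (ξ + 1 / (k + 1)))) atTop
      (nhds (μ {ξ})) := by
    have hinter : (⋂ k : ℕ, Set.Icc (ξ - 1 / (k + 1 : ℝ)) (ξ + 1 / (k + 1 : ℝ))) = {ξ} := by
      ext x
      simp only [Set.mem_iInter, Set.mem_Icc, Set.mem_singleton_iff]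
      constructor
      · intro h
        have habs : ∀ k : ℕ, |x - ξ| ≤ 1 / (k + 1) := fun k =>
          abs_sub_le_iff.mpr ⟨by linarith [(h k).2], by linarith [(h k).1]⟩
        have h0 : |x - ξ| ≤ 0 :=
          ge_of_tendsto' tendsto_one_div_add_atTop_nhds_zero_nat habs
        have := abs_nonpos_iff.mp h0
        linarith [sub_eq_zero.mp this]
      · rintro rfl
        intro k
        have : (0:ℝ) < 1 / (k + 1) := by positivity
        constructor <;> linarith
    have hmono : Antitone fun k : ℕ => Set.Icc (ξ - 1 / (k + 1 : ℝ)) (ξ + 1 / (k + 1 : ℝ)) := by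
      intro k l hkl
      have : 1 / (l + 1 : ℝ) ≤ 1 / (k + 1) := by
        apply one_div_le_one_div_of_le (by positivity)
        exact_mod_cast by omega
      exact Set.Icc_subset_Icc (by linarith) (by linarith)
    have := MeasureTheory.tendsto_measure_iInter_atTop (μ := μ)
      (fun k => measurableSet_Icc.nullMeasurableSet) hmono ⟨0, (measure_lt_top μ _).ne⟩
    rw [hinter] at this
    exact this
  have hA : Tendsto (fun k : ℕ => μ (Set.Icc (ξ - δ k) (ξ + δ k))) atTop (nhds (μ {ξ})) := by
    refine tendsto_of_tendsto_of_tendsto_of_le_of_le tendsto_const_nhds hS ?_ ?_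
    · intro k
      apply measure_mono
      rw [Set.singleton_subset_iff]
      have := (hδmem k).1
      exact ⟨by linarith, by linarith⟩
    · intro k
      apply measure_mono
      have := (hδmem k).2
      exact Set.Icc_subset_Icc (by linarith) (by linarith)
  -- pass to real numbers and diagonalize
  have hg : ∀ k : ℕ, Tendsto (fun ν => (μs ν (Set.Icc (ξ - δ k) (ξ + δ k))).toReal) atTop
      (nhds ((μ (Set.Icc (ξ - δ k) (ξ + δ k))).toReal)) := fun k =>
    (ENNReal.tendsto_toReal (measure_ne_top μ _)).comp
      (hIcc (δ k) (hδmem k).1 (hδ1 k) (hδ2 k))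
  have ha : Tendsto (fun k : ℕ => (μ (Set.Icc (ξ - δ k) (ξ + δ k))).toReal) atTop
      (nhds ((μ {ξ}).toReal)) :=
    (ENNReal.tendsto_toReal (measure_ne_top μ _)).comp hA
  obtain ⟨K, hKtop, hKlim⟩ := diag_aux hg ha
  refine ⟨fun ν => δ (K ν), fun ν => ((hδmem (K ν)).1).le, ?_, ?_⟩
  · apply squeeze_zero (fun ν => ((hδmem (K ν)).1).le)
      (fun ν => ((hδmem (K ν)).2).le)
    exact tendsto_one_div_add_atTop_nhds_zero_nat.comp hKtop
  · have hfin := ENNReal.tendsto_ofReal hKlim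
    rw [ENNReal.ofReal_toReal (measure_ne_top μ _)] at hfin
    refine hfin.congr fun ν => ENNReal.ofReal_toReal (measure_ne_top _ _)
end
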